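/- Let 𝒞 = (C, Q, 𝒯) be a counter system whose steps are exactly the lossy broadcast steps induced by a finite set of lossy broadcast transitions. Then every pair ((c,v),(c',v')) ∈ 𝒯 that is minimal in 𝒯 with respect to the product order ≼₀ × ≼₀ satisfies v(q) ≤ |Q| for all q ∈ Q. (A pair t ∈ 𝒯 is minimal if every t' ∈ 𝒯 with t' ≼₀ × ≼₀ t equals t.) -/
import Mathlib


namespace CS01

variable {C Q A : Type*}

/-- Configurations of a counter system: a controller state and a counter vector. -/
abbrev Conf (C Q : Type*) := C × (Q → ℕ)

/-- The order `≼₀`: same controller state, pointwise smaller counters,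
and the same zero pattern. -/
def Le0 (x y : Conf C Q) : Prop :=
  x.1 = y.1 ∧ (∀ q, x.2 q ≤ y.2 q) ∧ ∀ q, (x.2 q = 0 ↔ y.2 q = 0)

/-- The product order `≼₀ × ≼₀` on pairs of configurations. -/
def ProdLe0 (s t : Conf C Q × Conf C Q) : Prop :=
  Le0 s.1 t.1 ∧ Le0 s.2 t.2

/-- The abstraction `α`, mapping a configuration to its 01-abstraction. -/
def alpha (x : Conf C Q) : Conf C Q :=
  (x.1, fun q => if x.2 q = 0 then 0 else 1)

/-- Forward `≼₀`-compatibility of a step relation. -/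
def FwdCompat (T : Set (Conf C Q × Conf C Q)) : Prop :=
  ∀ x y d, (x, y) ∈ T → Le0 x d → ∃ d', (d, d') ∈ T ∧ Le0 y d'

/-- Backward `≼₀`-compatibility of a step relation. -/
def BwdCompat (T : Set (Conf C Q × Conf C Q)) : Prop :=
  ∀ x y d', (x, y) ∈ T → Le0 y d' → ∃ d, (d, d') ∈ T ∧ Le0 x d

/-- Steps of a counter system are size-preserving. -/
def SizePreserving [Fintype Q] (T : Set (Conf C Q × Conf C Q)) : Prop :=
  ∀ t ∈ T, ∑ q, t.1.2 q = ∑ q, t.2.2 q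

/-- A step of the 01-counter system `𝒞_α`. -/
def AbsStep (T : Set (Conf C Q × Conf C Q)) (x' y' : Conf C Q) : Prop :=
  ∃ t ∈ T, alpha t.1 = x' ∧ alpha t.2 = y'

/-- A finite run of the counter system, starting in an initial configuration. -/
def IsRun (T : Set (Conf C Q × Conf C Q)) (c0 : C) (Q0 : Set Q)
    {n : ℕ} (ρ : Fin (n + 1) → Conf C Q) : Prop :=
  (ρ 0).1 = c0 ∧ (∀ q ∉ Q0, (ρ 0).2 q = 0) ∧
    ∀ i : Fin n, (ρ i.castSucc, ρ i.succ) ∈ T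

/-- A finite run of the 01-counter system, starting in an initial (0/1-valued)
abstract configuration. -/
def IsAbsRun (T : Set (Conf C Q × Conf C Q)) (c0 : C) (Q0 : Set Q)
    {n : ℕ} (σ : Fin (n + 1) → Conf C Q) : Prop :=
  (σ 0).1 = c0 ∧ (∀ q, (σ 0).2 q ≤ 1) ∧ (∀ q ∉ Q0, (σ 0).2 q = 0) ∧
    ∀ i : Fin n, AbsStep T (σ i.castSucc) (σ i.succ)

/-- Reachability in the counter system. -/
def Reach (T : Set (Conf C Q × Conf C Q)) (c0 : C) (Q0 : Set Q)
    (x : Conf C Q) : Prop :=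
  ∃ (n : ℕ) (ρ : Fin (n + 1) → Conf C Q), IsRun T c0 Q0 ρ ∧ ρ (Fin.last n) = x

/-- Reachability in the 01-counter system. -/
def AbsReach (T : Set (Conf C Q × Conf C Q)) (c0 : C) (Q0 : Set Q)
    (x : Conf C Q) : Prop :=
  ∃ (n : ℕ) (σ : Fin (n + 1) → Conf C Q), IsAbsRun T c0 Q0 σ ∧ σ (Fin.last n) = x

/-- The counter vector obtained when `i` processes move from `p` to `p'`. -/
def moveN [DecidableEq Q] (v : Q → ℕ) (p p' : Q) (i : ℕ) : Q → ℕ :=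
  fun q => v q - (if q = p then i else 0) + (if q = p' then i else 0)

/-- Labels of lossy broadcast transitions: broadcast `!a` or receive `?a`. -/
inductive LBLab (A : Type*) where
  | br : A → LBLab A
  | rcv : A → LBLab A

/-- Number of transitions in the multiset `M` with source `q`. -/
def srcCount [DecidableEq Q] (M : Multiset (Q × Q)) (q : Q) : ℕ :=
  (M.map Prod.fst).count q

/-- Number of transitions in the multiset `M` with target `q`. -/
def tgtCount [DecidableEq Q] (M : Multiset (Q × Q)) (q : Q) : ℕ :=
  (M.map Prod.snd).count q

/-- A lossy broadcast step induced by controller transitions `ΔC` and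
user transitions `ΔQ`: one broadcast transition on some letter `a` is taken by
`j ≥ 1` processes, and an arbitrary multiset of receive transitions on `a` is
taken, each by one process; the controller takes at most one of the transitions. -/
def LBStep [DecidableEq Q] (ΔC : Set (C × LBLab A × C)) (ΔQ : Set (Q × LBLab A × Q))
    (x y : Conf C Q) : Prop :=
  ∃ (a : A) (Mb Mr : Multiset (Q × Q)),
    (∀ t ∈ Mb, (t.1, LBLab.br a, t.2) ∈ ΔQ) ∧
    (∀ t ∈ Mr, (t.1, LBLab.rcv a, t.2) ∈ ΔQ) ∧
    -- the unique broadcast transition is taken either by the controller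
    -- (and then no user broadcasts), or by j ≥ 1 user processes (and then the
    -- controller either takes a receive transition or does not move)
    (((x.1, LBLab.br a, y.1) ∈ ΔC ∧ Mb = 0) ∨
      ((∃ p0 p0' j, 1 ≤ j ∧ (p0, LBLab.br a, p0') ∈ ΔQ ∧
          Mb = Multiset.replicate j (p0, p0')) ∧
        ((x.1, LBLab.rcv a, y.1) ∈ ΔC ∨ y.1 = x.1))) ∧
    (∀ q, srcCount (Mb + Mr) q ≤ x.2 q) ∧
    ∀ q, y.2 q = x.2 q - srcCount (Mb + Mr) q + tgtCount (Mb + Mr) q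

private lemma srcCount_cons [DecidableEq Q] (e : Q × Q) (N : Multiset (Q × Q)) (r : Q) :
    srcCount (e ::ₘ N) r = srcCount N r + (if r = e.1 then 1 else 0) := by
  simp [srcCount, Multiset.count_cons]

private lemma tgtCount_cons [DecidableEq Q] (e : Q × Q) (N : Multiset (Q × Q)) (r : Q) :
    tgtCount (e ::ₘ N) r = tgtCount N r + (if r = e.2 then 1 else 0) := by
  simp [tgtCount, Multiset.count_cons]

/-- Pigeonhole: if more than `|Q|` transitions leave `q` (or at least `|Q|` and
none enters `q`), some transition `(q, p')` is taken at least twice, and then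
`p'` is entered at least twice. -/
private lemma pigeon [Fintype Q] [Nonempty Q] [DecidableEq Q] (M : Multiset (Q × Q)) (q : Q)
    (h : Fintype.card Q < srcCount M q ∨
      (Fintype.card Q ≤ srcCount M q ∧ tgtCount M q = 0)) :
    ∃ p', 2 ≤ Multiset.count (q, p') M ∧ 2 ≤ tgtCount M p' := by
  have hQ1 : 1 ≤ Fintype.card Q := Fintype.card_pos
  have key : ∀ p', 2 ≤ Multiset.count (q, p') M → 2 ≤ tgtCount M p' := by
    intro p' h2
    have hrep : Multiset.replicate 2 (q, p') ≤ M :=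
      Multiset.le_count_iff_replicate_le.mp h2
    have := Multiset.map_le_map (f := Prod.snd) hrep
    rw [Multiset.map_replicate] at this
    exact Multiset.le_count_iff_replicate_le.mpr this
  suffices hs : ∃ p', 2 ≤ Multiset.count (q, p') M by
    obtain ⟨p', hp'⟩ := hs; exact ⟨p', hp', key p' hp'⟩
  by_contra hno
  push_neg at hno
  set S := M.filter (fun e => q = e.1) with hS
  have hcard : srcCount M q = Multiset.card S := by
    rw [srcCount, Multiset.count_map]
  have hnodup : S.Nodup := by
    rw [Multiset.nodup_iff_count_le_one]
    rintro ⟨e1, e2⟩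
    by_cases he : (e1, e2) ∈ S
    · have h1 : q = e1 := (Multiset.mem_filter.mp he).2
      subst h1
      have h2 : Multiset.count (q, e2) S ≤ Multiset.count (q, e2) M :=
        Multiset.count_le_of_le _ (Multiset.filter_le _ M)
      have h3 := hno e2
      omega
    · rw [Multiset.count_eq_zero.mpr he]; omega
  have hmapnd : (S.map Prod.snd).Nodup := by
    refine hnodup.map_on ?_
    intro e1 h1 e2 h2 hsnd
    have g1 : q = e1.1 := (Multiset.mem_filter.mp h1).2
    have g2 : q = e2.1 := (Multiset.mem_filter.mp h2).2
    exact Prod.ext (g1 ▸ g2 ▸ rfl) hsnd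
  have hc2 : (S.map Prod.snd).toFinset.card = Multiset.card S := by
    rw [Multiset.toFinset_card_of_nodup hmapnd, Multiset.card_map]
  rcases h with h | ⟨hge, hzero⟩
  · have : (S.map Prod.snd).toFinset.card ≤ Fintype.card Q := Finset.card_le_univ _
    omega
  · have hqnot : q ∉ S.map Prod.snd := by
      intro hmem
      have h1 : (S.map Prod.snd) ≤ M.map Prod.snd :=
        Multiset.map_le_map (Multiset.filter_le _ M)
      have h2 : q ∈ M.map Prod.snd := Multiset.mem_of_le h1 hmem
      have := Multiset.count_pos.mpr h2
      rw [tgtCount] at hzero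
      omega
    have hsub : (S.map Prod.snd).toFinset ⊆ Finset.univ.erase q := by
      intro x hx
      rw [Finset.mem_erase]
      refine ⟨?_, Finset.mem_univ x⟩
      rintro rfl
      exact hqnot (Multiset.mem_toFinset.mp hx)
    have h3 : (S.map Prod.snd).toFinset.card ≤ Fintype.card Q - 1 := by
      have := Finset.card_le_card hsub
      rwa [Finset.card_erase_of_mem (Finset.mem_univ q), Finset.card_univ] at this
    omega

/-- In a counter system whose steps are exactly the lossy
broadcast steps, every pair of `𝒯` that is minimal with respect to `≼₀ × ≼₀`
has at most `|Q|` processes in each user state of its source configuration. -/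
theorem stmt17 [Fintype C] [Fintype Q] [Nonempty C] [Nonempty Q]
    [Fintype A] [DecidableEq Q]
    (ΔC : Set (C × LBLab A × C)) (ΔQ : Set (Q × LBLab A × Q))
    (T : Set (Conf C Q × Conf C Q))
    (hT : ∀ x y : Conf C Q, (x, y) ∈ T ↔ LBStep ΔC ΔQ x y)
    (t : Conf C Q × Conf C Q) (ht : t ∈ T)
    (hmin : ∀ t' ∈ T, ProdLe0 t' t → t' = t) :
    ∀ q, t.1.2 q ≤ Fintype.card Q := by
  have hQ1 : 1 ≤ Fintype.card Q := Fintype.card_pos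
  intro q
  by_contra hq
  push_neg at hq
  obtain ⟨⟨c, v⟩, ⟨c', w⟩⟩ := t
  simp only at hq
  replace ht := (hT _ _).mp ht
  obtain ⟨a, Mb, Mr, hMb, hMr, hctrl, hsrcb, hwdef⟩ := ht
  simp only [Prod.fst, Prod.snd] at hctrl hsrcb hwdef
  -- generic contradiction from a strictly smaller step
  have contra : ∀ v1 w1 : Q → ℕ, LBStep ΔC ΔQ (c, v1) (c', w1) →
      (∀ r, v1 r ≤ v r) → (∀ r, v1 r = 0 ↔ v r = 0) →
      (∀ r, w1 r ≤ w r) → (∀ r, w1 r = 0 ↔ w r = 0) → v1 q ≠ v q → False := by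
    intro v1 w1 hstep h1 h2 h3 h4 hne
    have hmem : ((c, v1), (c', w1)) ∈ T := (hT _ _).mpr hstep
    have heq := hmin _ hmem ⟨⟨rfl, h1, h2⟩, ⟨rfl, h3, h4⟩⟩
    exact hne (congrArg (fun p => p.1.2 q) heq)
  have h2v : 2 ≤ v q := by omega
  -- removal of an idle process at q
  have key1 : srcCount (Mb + Mr) q < v q → 2 ≤ w q → False := by
    intro hlt hw2
    refine contra (Function.update v q (v q - 1)) (Function.update w q (w q - 1))
      ⟨a, Mb, Mr, hMb, hMr, hctrl, ?_, ?_⟩ ?_ ?_ ?_ ?_ ?_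
    · intro r
      have e4 := hsrcb r
      show srcCount (Mb + Mr) r ≤ Function.update v q (v q - 1) r
      rw [Function.update_apply]
      split_ifs with h
      · subst h; omega
      · exact e4
    · intro r
      have e3 := hwdef r
      have e4 := hsrcb r
      show Function.update w q (w q - 1) r
          = Function.update v q (v q - 1) r - srcCount (Mb + Mr) r + tgtCount (Mb + Mr) r
      rw [Function.update_apply, Function.update_apply]
      split_ifs with h
      · subst h; omega
      · exact e3
    · intro r
      rw [Function.update_apply]
      split_ifs with h
      · subst h; omega
      · exact le_refl _
    · intro r
      rw [Function.update_apply]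
      split_ifs with h
      · subst h; omega
      · exact Iff.rfl
    · intro r
      rw [Function.update_apply]
      split_ifs with h
      · subst h; omega
      · exact le_refl _
    · intro r
      rw [Function.update_apply]
      split_ifs with h
      · subst h; omega
      · exact Iff.rfl
    · simp only [Function.update_self]; omega
  -- removal of a duplicated transition with source q
  have key2 : ∀ p', 2 ≤ Multiset.count (q, p') (Mb + Mr) →
      2 ≤ tgtCount (Mb + Mr) p' → False := by
    intro p' hc2 ht2
    obtain ⟨Mb', Mr', hMb', hMr', hctrl', hsum⟩ :
        ∃ Mb' Mr' : Multiset (Q × Q),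
          (∀ e ∈ Mb', (e.1, LBLab.br a, e.2) ∈ ΔQ) ∧
          (∀ e ∈ Mr', (e.1, LBLab.rcv a, e.2) ∈ ΔQ) ∧
          (((c, LBLab.br a, c') ∈ ΔC ∧ Mb' = 0) ∨
            ((∃ p0 p0' j, 1 ≤ j ∧ (p0, LBLab.br a, p0') ∈ ΔQ ∧
                Mb' = Multiset.replicate j (p0, p0')) ∧
              ((c, LBLab.rcv a, c') ∈ ΔC ∨ c' = c))) ∧
          Mb + Mr = (q, p') ::ₘ (Mb' + Mr') := by
      by_cases hin : (q, p') ∈ Mr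
      · refine ⟨Mb, Mr.erase (q, p'), hMb,
          fun e he => hMr e (Multiset.mem_of_mem_erase he), hctrl, ?_⟩
        conv_lhs => rw [← Multiset.cons_erase hin]
        rw [Multiset.add_cons]
      · have hcr : Multiset.count (q, p') Mr = 0 := Multiset.count_eq_zero.mpr hin
        have hcb : 2 ≤ Multiset.count (q, p') Mb := by
          rw [Multiset.count_add] at hc2; omega
        rcases hctrl with ⟨hc, hMb0⟩ | ⟨⟨p0, p0', j, hj, hδ, hrep⟩, hc⟩
        · rw [hMb0] at hcb; simp at hcb
        · rw [hrep, Multiset.count_replicate] at hcb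
          split_ifs at hcb with hx
          · obtain ⟨k, rfl⟩ : ∃ k, j = k + 1 := ⟨j - 1, by omega⟩
            refine ⟨Multiset.replicate k (p0, p0'), Mr, ?_, hMr,
              Or.inr ⟨⟨p0, p0', k, by omega, hδ, rfl⟩, hc⟩, ?_⟩
            · intro e he
              rw [Multiset.eq_of_mem_replicate he]; exact hδ
            · rw [hrep, Multiset.replicate_succ, ← hx, Multiset.cons_add]
          · omega
    have hsrcEq : ∀ r, srcCount (Mb + Mr) r =
        srcCount (Mb' + Mr') r + (if r = q then 1 else 0) := by
      intro r; rw [hsum, srcCount_cons]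
    have htgtEq : ∀ r, tgtCount (Mb + Mr) r =
        tgtCount (Mb' + Mr') r + (if r = p' then 1 else 0) := by
      intro r; rw [hsum, tgtCount_cons]
    have hwp' : 2 ≤ w p' := by
      have := hwdef p'; have := hsrcb p'; omega
    refine contra (Function.update v q (v q - 1)) (Function.update w p' (w p' - 1))
      ⟨a, Mb', Mr', hMb', hMr', hctrl', ?_, ?_⟩ ?_ ?_ ?_ ?_ ?_
    · intro r
      have e4 := hsrcb r
      have e1 := hsrcEq r
      show srcCount (Mb' + Mr') r ≤ Function.update v q (v q - 1) r
      rw [Function.update_apply]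
      split_ifs at e1 ⊢ with h
      · subst h; omega
      · omega
    · intro r
      have e3 := hwdef r
      have e4 := hsrcb r
      show Function.update w p' (w p' - 1) r
          = Function.update v q (v q - 1) r - srcCount (Mb' + Mr') r + tgtCount (Mb' + Mr') r
      rw [Function.update_apply, Function.update_apply]
      by_cases h1 : r = q
      · subst h1
        by_cases h2 : r = p'
        · subst h2
          have e1 : srcCount (Mb + Mr) r = srcCount (Mb' + Mr') r + 1 := by
            simpa using hsrcEq r
          have e2 : tgtCount (Mb + Mr) r = tgtCount (Mb' + Mr') r + 1 := by
            simpa using htgtEq r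
          rw [if_pos rfl, if_pos rfl]
          omega
        · have e1 : srcCount (Mb + Mr) r = srcCount (Mb' + Mr') r + 1 := by
            simpa using hsrcEq r
          have e2 : tgtCount (Mb + Mr) r = tgtCount (Mb' + Mr') r := by
            simpa [h2] using htgtEq r
          rw [if_neg h2, if_pos rfl]
          omega
      · by_cases h2 : r = p'
        · subst h2
          have e1 : srcCount (Mb + Mr) r = srcCount (Mb' + Mr') r := by
            simpa [h1] using hsrcEq r
          have e2 : tgtCount (Mb + Mr) r = tgtCount (Mb' + Mr') r + 1 := by
            simpa using htgtEq r
          rw [if_pos rfl, if_neg h1]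
          omega
        · have e1 : srcCount (Mb + Mr) r = srcCount (Mb' + Mr') r := by
            simpa [h1] using hsrcEq r
          have e2 : tgtCount (Mb + Mr) r = tgtCount (Mb' + Mr') r := by
            simpa [h2] using htgtEq r
          rw [if_neg h2, if_neg h1]
          omega
    · intro r
      rw [Function.update_apply]
      split_ifs with h
      · subst h; omega
      · exact le_refl _
    · intro r
      rw [Function.update_apply]
      split_ifs with h
      · subst h; omega
      · exact Iff.rfl
    · intro r
      rw [Function.update_apply]
      split_ifs with h
      · subst h; omega
      · exact le_refl _
    · intro r
      rw [Function.update_apply]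
      split_ifs with h
      · subst h; omega
      · exact Iff.rfl
    · simp only [Function.update_self]; omega
  -- main case analysis
  have hsq := hsrcb q
  have hwq := hwdef q
  by_cases hidle : srcCount (Mb + Mr) q < v q
  · by_cases hw2 : 2 ≤ w q
    · exact key1 hidle hw2
    · have hg : tgtCount (Mb + Mr) q = 0 := by omega
      have hcard : Fintype.card Q ≤ srcCount (Mb + Mr) q := by omega
      obtain ⟨p', h1, h2⟩ := pigeon (Mb + Mr) q (Or.inr ⟨hcard, hg⟩)
      exact key2 p' h1 h2
  · have hlt : Fintype.card Q < srcCount (Mb + Mr) q := by omega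
    obtain ⟨p', h1, h2⟩ := pigeon (Mb + Mr) q (Or.inl hlt)
    exact key2 p' h1 h2

end CS01
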